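/- arXiv:0902.2535 — 2 statements merged into one kernel-verified Lean document; each statement's English description precedes it below -/
import Mathlib

section
/- For all real numbers a, b, c, the endomorphism-valued 2-form R = a·Π + b·Φ + c·Ψ satisfies the holomorphic pseudosymmetry identity R.R = (a + b/2)·(Π.R), where the dot denotes the derivation action of curvature-type tensors on each other. -/
open scoped RealInnerProductSpace

noncomputable section

variable {V : Type*} [NormedAddCommGroup V] [InnerProductSpace ℝ V] [FiniteDimensional ℝ V]

/-- The orthogonal projection onto `D`, as a map `V → V`. -/
def projD (D : Submodule ℝ V) (X : V) : V := (Submodule.orthogonalProjectionOnto D X : V)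

/-- The bilinear form `h(X,Y) = ⟪πX, πY⟫`. -/
def hForm (D : Submodule ℝ V) (X Y : V) : ℝ := ⟪projD D X, projD D Y⟫

/-- The 2-form `ω(X,Y) = h(JX, Y)`. -/
def omForm (J : V →ₗ[ℝ] V) (D : Submodule ℝ V) (X Y : V) : ℝ := hForm D (J X) Y

/-- The standard Kähler curvature-type tensor `Π` of constant holomorphic sectional curvature. -/
def PiT (J : V →ₗ[ℝ] V) (U Vv W : V) : V :=
  (1/4 : ℝ) • (⟪Vv, W⟫ • U - ⟪U, W⟫ • Vv + ⟪J Vv, W⟫ • J U - ⟪J U, W⟫ • J Vv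
    - (2 * ⟪J U, Vv⟫) • J W)

/-- The curvature-type tensor `Φ`. -/
def PhiT (J : V →ₗ[ℝ] V) (D : Submodule ℝ V) (U Vv W : V) : V :=
  (1/8 : ℝ) • (⟪Vv, W⟫ • projD D U - ⟪U, W⟫ • projD D Vv
    + hForm D Vv W • U - hForm D U W • Vv
    + ⟪J Vv, W⟫ • projD D (J U) - ⟪J U, W⟫ • projD D (J Vv)
    + omForm J D Vv W • J U - omForm J D U W • J Vv
    - (2 * ⟪J U, Vv⟫) • projD D (J W) - (2 * omForm J D U Vv) • J W)

/-- The curvature-type tensor `Ψ(U,V)W = −ω(U,V)·J(πW)`. -/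
def PsiT (J : V →ₗ[ℝ] V) (D : Submodule ℝ V) (U Vv W : V) : V :=
  -(omForm J D U Vv) • J (projD D W)

/-- The derivation action of an endomorphism `A` on a bilinear form `T`. -/
def der2 (A : V → V) (T : V → V → ℝ) (X Y : V) : ℝ := -T (A X) Y - T X (A Y)

/-- The derivation action of an endomorphism `A` on a 4-multilinear form `T`. -/
def der4 (A : V → V) (T : V → V → V → V → ℝ) (X Y Z W : V) : ℝ :=
  -T (A X) Y Z W - T X (A Y) Z W - T X Y (A Z) W - T X Y Z (A W)

/-- The 4-form `S₀(X,Y,Z,W) = ⟪S(X,Y)Z, W⟫` associated with an endomorphism-valued 2-form. -/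
def form4 (S : V → V → V → V) (X Y Z W : V) : ℝ := ⟪S X Y Z, W⟫

/-- The 6-multilinear form `(R.S)(U,V,X,Y,Z,W) = (R(U,V).S₀)(X,Y,Z,W)`. -/
def dotRS (R S : V → V → V → V) (U Vv X Y Z W : V) : ℝ :=
  der4 (R U Vv) (form4 S) X Y Z W

set_option linter.unusedSectionVars false
set_option linter.unusedVariables false

variable (J : V →ₗ[ℝ] V) (D : Submodule ℝ V)

lemma projD_add (D : Submodule ℝ V) (x y : V) : projD D (x + y) = projD D x + projD D y := by
  simp [projD]
lemma projD_sub (D : Submodule ℝ V) (x y : V) : projD D (x - y) = projD D x - projD D y := by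
  simp [projD]
lemma projD_smul (D : Submodule ℝ V) (r : ℝ) (x : V) : projD D (r • x) = r • projD D x := by
  simp [projD]
lemma projD_neg (D : Submodule ℝ V) (x : V) : projD D (-x) = -projD D x := by
  simp [projD]
lemma projD_mem (D : Submodule ℝ V) (x : V) : projD D x ∈ D := (Submodule.orthogonalProjectionOnto D x).2
lemma projD_projD (D : Submodule ℝ V) (x : V) : projD D (projD D x) = projD D x := by
  simp [projD, Submodule.starProjection_eq_self_iff]
lemma inner_projD_right (D : Submodule ℝ V) (x y : V) :
    ⟪x, projD D y⟫ = ⟪projD D x, y⟫ :=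
  (Submodule.inner_starProjection_left_eq_right D x y).symm

lemma projD_J (D : Submodule ℝ V) (J : V →ₗ[ℝ] V) (hJ2 : ∀ X : V, J (J X) = -X)
    (hJg : ∀ X Y : V, ⟪J X, J Y⟫ = ⟪X, Y⟫) (hJD : ∀ X ∈ D, J X ∈ D) (x : V) :
    projD D (J x) = J (projD D x) := by
  have hskew : ∀ u w : V, ⟪J u, w⟫ = -⟪u, J w⟫ := by
    intro u w
    have := hJg u (J w)
    rw [hJ2] at this
    simp only [inner_neg_right] at this
    linarith
  refine Submodule.eq_starProjection_of_mem_of_inner_eq_zero (K := D) (hJD _ (projD_mem D x)) ?_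
  intro w hw
  have h1 : J x - J (projD D x) = J (x - projD D x) := by rw [map_sub]
  rw [h1, hskew]
  have h2 : x - projD D x ∈ Dᗮ := Submodule.sub_starProjection_mem_orthogonal (K := D) x
  have := h2 (J w) (hJD _ hw)
  rw [real_inner_comm] at this
  simp [this]

lemma J_right (J : V →ₗ[ℝ] V) (hJ2 : ∀ X : V, J (J X) = -X)
    (hJg : ∀ X Y : V, ⟪J X, J Y⟫ = ⟪X, Y⟫) (x y : V) : ⟪x, J y⟫ = -⟪J x, y⟫ := by
  have := hJg x (J y)
  rw [hJ2] at this
  simp only [inner_neg_right] at this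
  linarith

/-- the difference operator `A = b (Φ(U,V) - Π(U,V)/2) + c Ψ(U,V)` -/
def Amap (J : V →ₗ[ℝ] V) (D : Submodule ℝ V) (b c : ℝ) (U Vv x : V) : V :=
  b • (PhiT J D U Vv x - (1/2 : ℝ) • PiT J U Vv x) + c • PsiT J D U Vv x

variable (J : V →ₗ[ℝ] V) (D : Submodule ℝ V)

lemma Amap_J (hJ2 : ∀ X : V, J (J X) = -X)
    (hJg : ∀ X Y : V, ⟪J X, J Y⟫ = ⟪X, Y⟫) (hJD : ∀ X ∈ D, J X ∈ D)
    (b c : ℝ) (U Vv x : V) :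
    J (Amap J D b c U Vv x) = Amap J D b c U Vv (J x) := by
  simp only [Amap, PiT, PhiT, PsiT, hForm, omForm,
    projD_J D J hJ2 hJg hJD, projD_projD, projD_add, projD_sub, projD_smul, projD_neg,
    map_add, map_sub, map_smul, map_neg, hJ2,
    inner_projD_right, J_right J hJ2 hJg,
    inner_add_left, inner_add_right, inner_sub_left, inner_sub_right,
    inner_neg_left, inner_neg_right, real_inner_smul_left, real_inner_smul_right,
    smul_add, smul_sub, smul_neg, smul_smul, neg_smul, neg_neg]
  module

lemma Amap_p (hJ2 : ∀ X : V, J (J X) = -X)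
    (hJg : ∀ X Y : V, ⟪J X, J Y⟫ = ⟪X, Y⟫) (hJD : ∀ X ∈ D, J X ∈ D)
    (b c : ℝ) (U Vv x : V) :
    projD D (Amap J D b c U Vv x) = Amap J D b c U Vv (projD D x) := by
  simp only [Amap, PiT, PhiT, PsiT, hForm, omForm,
    projD_J D J hJ2 hJg hJD, projD_projD, projD_add, projD_sub, projD_smul, projD_neg,
    map_add, map_sub, map_smul, map_neg, hJ2,
    inner_projD_right, J_right J hJ2 hJg,
    inner_add_left, inner_add_right, inner_sub_left, inner_sub_right,
    inner_neg_left, inner_neg_right, real_inner_smul_left, real_inner_smul_right,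
    smul_add, smul_sub, smul_neg, smul_smul, neg_smul, neg_neg]
  module

lemma Amap_skew (hJ2 : ∀ X : V, J (J X) = -X)
    (hJg : ∀ X Y : V, ⟪J X, J Y⟫ = ⟪X, Y⟫) (hJD : ∀ X ∈ D, J X ∈ D)
    (b c : ℝ) (U Vv x y : V) :
    ⟪Amap J D b c U Vv x, y⟫ = -⟪x, Amap J D b c U Vv y⟫ := by
  rw [show (⟪x, Amap J D b c U Vv y⟫ : ℝ) = ⟪Amap J D b c U Vv y, x⟫ from real_inner_comm _ _]
  have hxy1 : ⟪J y, x⟫ = -⟪J x, y⟫ := by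
    rw [real_inner_comm x (J y), J_right J hJ2 hJg]
  have hxy2 : ⟪J (projD D y), x⟫ = -⟪J (projD D x), y⟫ := by
    rw [real_inner_comm x (J (projD D y)), J_right J hJ2 hJg,
      inner_projD_right, projD_J D J hJ2 hJg hJD]
  have hxy3 : ⟪projD D y, x⟫ = ⟪projD D x, y⟫ := by
    rw [real_inner_comm x (projD D y), inner_projD_right]
  have hxy4 : ⟪y, x⟫ = ⟪x, y⟫ := real_inner_comm x y
  simp only [Amap, PiT, PhiT, PsiT, hForm, omForm,
    projD_J D J hJ2 hJg hJD, projD_projD, projD_add, projD_sub, projD_smul, projD_neg,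
    map_add, map_sub, map_smul, map_neg, hJ2,
    inner_projD_right, J_right J hJ2 hJg,
    inner_add_left, inner_add_right, inner_sub_left, inner_sub_right,
    inner_neg_left, inner_neg_right, real_inner_smul_left, real_inner_smul_right,
    smul_add, smul_sub, smul_neg, smul_smul, neg_smul, neg_neg,
    hxy1, hxy2, hxy3, hxy4]
  ring

lemma Amap_inner_p (hJ2 : ∀ X : V, J (J X) = -X)
    (hJg : ∀ X Y : V, ⟪J X, J Y⟫ = ⟪X, Y⟫) (hJD : ∀ X ∈ D, J X ∈ D)
    (b c : ℝ) (U Vv t s : V) :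
    ⟪t, Amap J D b c U Vv (projD D s)⟫ = ⟪projD D t, Amap J D b c U Vv s⟫ := by
  have h1 := Amap_skew J D hJ2 hJg hJD b c U Vv t (projD D s)
  have h2 := inner_projD_right D (Amap J D b c U Vv t) s
  have h3 := Amap_p J D hJ2 hJg hJD b c U Vv t
  have h4 := Amap_skew J D hJ2 hJg hJD b c U Vv (projD D t) s
  rw [h3] at h2
  have h5 := real_inner_comm (Amap J D b c U Vv t) (projD D s)
  linarith

/-- the quadrilinear form of `R = aΠ + bΦ + cΨ`. -/
def Ft (J : V →ₗ[ℝ] V) (D : Submodule ℝ V) (a b c : ℝ) (x y z w : V) : ℝ :=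
  ⟪a • PiT J x y z + b • PhiT J D x y z + c • PsiT J D x y z, w⟫

lemma key_der (hJ2 : ∀ X : V, J (J X) = -X)
    (hJg : ∀ X Y : V, ⟪J X, J Y⟫ = ⟪X, Y⟫) (hJD : ∀ X ∈ D, J X ∈ D)
    (a b c : ℝ) (U Vv x y z w : V) :
    Ft J D a b c (Amap J D b c U Vv x) y z w + Ft J D a b c x (Amap J D b c U Vv y) z w
      + Ft J D a b c x y (Amap J D b c U Vv z) w
      + Ft J D a b c x y z (Amap J D b c U Vv w) = 0 := by
  simp only [Ft, PiT, PhiT, PsiT, hForm, omForm,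
    Amap_J J D hJ2 hJg hJD, Amap_p J D hJ2 hJg hJD, Amap_inner_p J D hJ2 hJg hJD,
    projD_J D J hJ2 hJg hJD, projD_projD, projD_add, projD_sub, projD_smul, projD_neg,
    map_add, map_sub, map_smul, map_neg, hJ2,
    inner_projD_right, Amap_skew J D hJ2 hJg hJD,
    inner_add_left, inner_add_right, inner_sub_left, inner_sub_right,
    inner_neg_left, inner_neg_right, real_inner_smul_left, real_inner_smul_right,
    smul_add, smul_sub, smul_neg, smul_smul, neg_smul, neg_neg]
  ring

lemma Ft_lin1 (a b c : ℝ) (u v y z w : V) (r : ℝ) :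
    Ft J D a b c (u + r • v) y z w = Ft J D a b c u y z w + r * Ft J D a b c v y z w := by
  simp only [Ft, PiT, PhiT, PsiT, hForm, omForm,
    projD_projD, projD_add, projD_sub, projD_smul, projD_neg,
    map_add, map_sub, map_smul, map_neg,
    inner_add_left, inner_add_right, inner_sub_left, inner_sub_right,
    inner_neg_left, inner_neg_right, real_inner_smul_left, real_inner_smul_right,
    smul_add, smul_sub, smul_neg, smul_smul, neg_smul, neg_neg]
  ring

lemma Ft_lin2 (a b c : ℝ) (x u v z w : V) (r : ℝ) :
    Ft J D a b c x (u + r • v) z w = Ft J D a b c x u z w + r * Ft J D a b c x v z w := by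
  simp only [Ft, PiT, PhiT, PsiT, hForm, omForm,
    projD_projD, projD_add, projD_sub, projD_smul, projD_neg,
    map_add, map_sub, map_smul, map_neg,
    inner_add_left, inner_add_right, inner_sub_left, inner_sub_right,
    inner_neg_left, inner_neg_right, real_inner_smul_left, real_inner_smul_right,
    smul_add, smul_sub, smul_neg, smul_smul, neg_smul, neg_neg]
  ring

lemma Ft_lin3 (a b c : ℝ) (x y u v w : V) (r : ℝ) :
    Ft J D a b c x y (u + r • v) w = Ft J D a b c x y u w + r * Ft J D a b c x y v w := by
  simp only [Ft, PiT, PhiT, PsiT, hForm, omForm,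
    projD_projD, projD_add, projD_sub, projD_smul, projD_neg,
    map_add, map_sub, map_smul, map_neg,
    inner_add_left, inner_add_right, inner_sub_left, inner_sub_right,
    inner_neg_left, inner_neg_right, real_inner_smul_left, real_inner_smul_right,
    smul_add, smul_sub, smul_neg, smul_smul, neg_smul, neg_neg]
  ring

lemma Ft_lin4 (a b c : ℝ) (x y z u v : V) (r : ℝ) :
    Ft J D a b c x y z (u + r • v) = Ft J D a b c x y z u + r * Ft J D a b c x y z v := by
  simp only [Ft, inner_add_right, real_inner_smul_right]


theorem stmt_0 {V : Type*} [NormedAddCommGroup V] [InnerProductSpace ℝ V]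
    [FiniteDimensional ℝ V]
    (J : V →ₗ[ℝ] V) (hJ2 : ∀ X : V, J (J X) = -X)
    (hJg : ∀ X Y : V, ⟪J X, J Y⟫ = ⟪X, Y⟫)
    (D : Submodule ℝ V) (hD2 : Module.finrank ℝ ↥D = 2)
    (hJD : ∀ X ∈ D, J X ∈ D) :
    ∀ a b c : ℝ, ∀ U Vv X Y Z W : V,
      dotRS (fun P Q W0 => a • PiT J P Q W0 + b • PhiT J D P Q W0 + c • PsiT J D P Q W0)
        (fun P Q W0 => a • PiT J P Q W0 + b • PhiT J D P Q W0 + c • PsiT J D P Q W0) U Vv X Y Z W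
      = (a + b / 2) *
        dotRS (PiT J) (fun P Q W0 => a • PiT J P Q W0 + b • PhiT J D P Q W0 + c • PsiT J D P Q W0) U Vv X Y Z W := by
  intro a b c U Vv X Y Z W
  have hsplit : ∀ x0 : V, a • PiT J U Vv x0 + b • PhiT J D U Vv x0 + c • PsiT J D U Vv x0
      = Amap J D b c U Vv x0 + (a + b / 2) • PiT J U Vv x0 := by
    intro x0
    simp only [Amap]
    module
  have key := key_der J D hJ2 hJg hJD a b c U Vv
  simp only [dotRS, der4, form4]
  rw [hsplit X, hsplit Y, hsplit Z, hsplit W]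
  have hFt : ∀ x y z w : V, (⟪a • PiT J x y z + b • PhiT J D x y z + c • PsiT J D x y z, w⟫ : ℝ)
      = Ft J D a b c x y z w := fun _ _ _ _ => rfl
  simp only [hFt]
  simp only [Ft_lin1 J D, Ft_lin2 J D, Ft_lin3 J D, Ft_lin4 J D]
  linarith [key X Y Z W]
end
end

section
/- The tensors Π, Φ, Ψ satisfy the relation Ψ.Π + Π.Ψ = 2(Φ.Ψ + Ψ.Φ). -/
open scoped RealInnerProductSpace

noncomputable section

variable {V : Type*} [NormedAddCommGroup V] [InnerProductSpace ℝ V] [FiniteDimensional ℝ V]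

theorem stmt_12 {V : Type*} [NormedAddCommGroup V] [InnerProductSpace ℝ V]
    [FiniteDimensional ℝ V]
    (J : V →ₗ[ℝ] V) (hJ2 : ∀ X : V, J (J X) = -X)
    (hJg : ∀ X Y : V, ⟪J X, J Y⟫ = ⟪X, Y⟫)
    (D : Submodule ℝ V) (hD2 : Module.finrank ℝ ↥D = 2)
    (hJD : ∀ X ∈ D, J X ∈ D) :
    ∀ U Vv X Y Z W : V,
      dotRS (PsiT J D) (PiT J) U Vv X Y Z W
        + dotRS (PiT J) (PsiT J D) U Vv X Y Z W
      = 2 * (dotRS (PhiT J D) (PsiT J D) U Vv X Y Z W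
          + dotRS (PsiT J D) (PhiT J D) U Vv X Y Z W) := by
  have mvJ : ∀ a b : V, ⟪a, J b⟫ = -⟪J a, b⟫ := by
    intro a b
    have h1 := hJg a (J b)
    rw [hJ2, inner_neg_right] at h1
    linarith
  have p_add : ∀ a b : V, projD D (a + b) = projD D a + projD D b := by
    intro a b; simp [projD]
  have p_sub : ∀ a b : V, projD D (a - b) = projD D a - projD D b := by
    intro a b; simp [projD]
  have p_neg : ∀ a : V, projD D (-a) = -projD D a := by
    intro a; simp [projD]
  have p_smul : ∀ (r : ℝ) (a : V), projD D (r • a) = r • projD D a := by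
    intro r a; simp [projD]
  have p_idem : ∀ a : V, projD D (projD D a) = projD D a := by
    intro a
    exact Submodule.starProjection_eq_self_iff.mpr (SetLike.coe_mem _)
  have mvp : ∀ a b : V, ⟪a, projD D b⟫ = ⟪projD D a, b⟫ := by
    intro a b
    exact (Submodule.inner_starProjection_left_eq_right D a b).symm
  have p_J : ∀ a : V, projD D (J a) = J (projD D a) := by
    intro a
    simp only [projD]
    refine Submodule.eq_starProjection_of_mem_of_inner_eq_zero
      (hJD _ (SetLike.coe_mem _)) ?_
    intro w hw
    have h1 : J a - J ((Submodule.orthogonalProjectionOnto D a : V)) =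
        J (a - (Submodule.orthogonalProjectionOnto D a : V)) := by rw [map_sub]
    rw [h1]
    have h2 := mvJ (a - (Submodule.orthogonalProjectionOnto D a : V)) w
    have h3 := Submodule.starProjection_inner_eq_zero (K := D) a (J w) (hJD w hw)
    have h4 := mvJ (a - (Submodule.orthogonalProjectionOnto D a : V)) w
    have h5 : ⟪a - (Submodule.orthogonalProjectionOnto D a : V), J w⟫ = 0 := h3
    rw [h5] at h4
    linarith
  have sg : ∀ a b : V, ⟪b, a⟫ = ⟪a, b⟫ := fun a b => real_inner_comm a b
  have sJ : ∀ a b : V, ⟪J b, a⟫ = -⟪J a, b⟫ := by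
    intro a b
    rw [sg a (J b)]
    exact mvJ a b
  have sp : ∀ a b : V, ⟪projD D b, a⟫ = ⟪projD D a, b⟫ := by
    intro a b
    rw [sg a (projD D b)]
    exact mvp a b
  have sJp : ∀ a b : V, ⟪J (projD D b), a⟫ = -⟪J (projD D a), b⟫ := by
    intro a b
    rw [sJ a (projD D b), mvp, p_J]
  have zJ : ∀ a : V, ⟪J a, a⟫ = 0 := by
    intro a; have := sJ a a; linarith
  have zJp : ∀ a : V, ⟪J (projD D a), a⟫ = 0 := by
    intro a; have := sJp a a; linarith
  intro U Vv X Y Z W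
  simp only [dotRS, der4, form4, PsiT, PiT, PhiT, hForm, omForm]
  simp only [p_add, p_sub, p_neg, p_smul, p_idem, p_J, map_add, map_sub, map_neg,
    map_smul, hJ2, neg_smul, smul_neg,
    inner_add_left, inner_add_right, inner_sub_left, inner_sub_right,
    inner_neg_left, inner_neg_right, real_inner_smul_left, real_inner_smul_right,
    mvJ, mvp]
  simp only [sg U Vv, sg U X, sg U Y, sg U Z, sg U W, sg Vv X, sg Vv Y, sg Vv Z,
    sg Vv W, sg X Y, sg X Z, sg X W, sg Y Z, sg Y W, sg Z W,
    sJ U Vv, sJ U X, sJ U Y, sJ U Z, sJ U W, sJ Vv X, sJ Vv Y, sJ Vv Z,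
    sJ Vv W, sJ X Y, sJ X Z, sJ X W, sJ Y Z, sJ Y W, sJ Z W,
    sp U Vv, sp U X, sp U Y, sp U Z, sp U W, sp Vv X, sp Vv Y, sp Vv Z,
    sp Vv W, sp X Y, sp X Z, sp X W, sp Y Z, sp Y W, sp Z W,
    sJp U Vv, sJp U X, sJp U Y, sJp U Z, sJp U W, sJp Vv X, sJp Vv Y, sJp Vv Z,
    sJp Vv W, sJp X Y, sJp X Z, sJp X W, sJp Y Z, sJp Y W, sJp Z W,
    zJ U, zJ Vv, zJ X, zJ Y, zJ Z, zJ W,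
    zJp U, zJp Vv, zJp X, zJp Y, zJp Z, zJp W]
  ring
end
end
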